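/- Let a>0, s>1/2 with s−1/2 ∉ ℕ, m = ⌊s−1/2⌋, and let g ∈ L²([-a,a]). Define F(z) = (2π)^{-1/2} ∫_{-a}^{a} g(ξ) |ξ|^{-s} (e^{izξ} − P_m(izξ)) dξ. Then: (i) the integral converges absolutely for every z ∈ ℂ; (ii) F is entire of exponential type a; (iii) F^{(j)}(0) = 0 for all 0 ≤ j ≤ m; and (iv) for every z ∈ ℂ, F^{(m+1)}(z) = (2π)^{-1/2} ∫_{-a}^{a} (iξ)^{m+1} |ξ|^{-s} g(ξ) e^{izξ} dξ. (This is the inverse of the fractional Laplacian Δ^{s/2} : PW^s_a → PW_a applied to the function of PW_a with Fourier transform g.) -/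

import Mathlib

open MeasureTheory Complex Filter Topology

noncomputable section

/-- `F` is an entire function of exponential type `a`. -/
def ExpType (a : ℝ) (F : ℂ → ℂ) : Prop :=
  ∀ ε > (0 : ℝ), ∃ C > (0 : ℝ), ∀ z : ℂ, ‖F z‖ ≤ C * Real.exp ((a + ε) * ‖z‖)

/-- remainder of the exponential series -/
lemma rem_bound17 (n : ℕ) (w : ℂ) :
    ‖Complex.exp w - ∑ j ∈ Finset.range n, w ^ j / (j.factorial : ℂ)‖ ≤
      ‖w‖ ^ n * Real.exp ‖w‖ := by
  have hs : HasSum (fun j : ℕ => w ^ j / (j.factorial : ℂ)) (Complex.exp w) := by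
    rw [Complex.exp_eq_exp_ℂ]
    exact NormedSpace.expSeries_div_hasSum_exp w
  have hsum : Summable (fun j : ℕ => w ^ j / (j.factorial : ℂ)) := hs.summable
  have key : Complex.exp w - ∑ j ∈ Finset.range n, w ^ j / (j.factorial : ℂ)
      = ∑' k : ℕ, w ^ (k + n) / ((k + n).factorial : ℂ) := by
    rw [← hs.tsum_eq, ← hsum.sum_add_tsum_nat_add n]
    ring
  rw [key]
  have hsumr : Summable (fun k : ℕ => ‖w‖ ^ (k + n) / ((k + n).factorial : ℝ)) :=
    (summable_nat_add_iff n).2 (Real.summable_pow_div_factorial ‖w‖)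
  have h1 : ‖∑' k : ℕ, w ^ (k + n) / ((k + n).factorial : ℂ)‖ ≤
      ∑' k : ℕ, ‖w‖ ^ (k + n) / ((k + n).factorial : ℝ) := by
    refine (norm_tsum_le_tsum_norm ?_).trans_eq ?_
    · simpa [norm_div, norm_pow] using hsumr
    · congr 1; ext k; simp [norm_div, norm_pow]
  refine h1.trans ?_
  have h2 : ∀ k : ℕ, ‖w‖ ^ (k + n) / ((k + n).factorial : ℝ) ≤
      ‖w‖ ^ n * (‖w‖ ^ k / (k.factorial : ℝ)) := by
    intro k
    rw [pow_add, mul_comm (‖w‖ ^ k), mul_div_assoc]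
    refine mul_le_mul_of_nonneg_left ?_ (by positivity)
    refine div_le_div_of_nonneg_left (by positivity) (by positivity) ?_
    exact_mod_cast Nat.factorial_le (Nat.le_add_right k n)
  calc ∑' k : ℕ, ‖w‖ ^ (k + n) / ((k + n).factorial : ℝ)
      ≤ ∑' k : ℕ, ‖w‖ ^ n * (‖w‖ ^ k / (k.factorial : ℝ)) :=
        Summable.tsum_le_tsum h2 hsumr ((Real.summable_pow_div_factorial ‖w‖).mul_left _)
    _ = ‖w‖ ^ n * Real.exp ‖w‖ := by
        rw [tsum_mul_left]
        congr 1
        rw [Real.exp_eq_exp_ℝ]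
        exact (NormedSpace.expSeries_div_hasSum_exp ‖w‖).tsum_eq

lemma pow_le_exp17 (n : ℕ) {ε t : ℝ} (hε : 0 < ε) (ht : 0 ≤ t) :
    t ^ n ≤ ((n.factorial : ℝ) / ε ^ n) * Real.exp (ε * t) := by
  have h1 : (ε * t) ^ n / (n.factorial : ℝ) ≤ Real.exp (ε * t) := by
    have h2 : (ε * t) ^ n / (n.factorial : ℝ) ≤
        ∑ i ∈ Finset.range (n + 1), (ε * t) ^ i / (i.factorial : ℝ) := by
      refine Finset.single_le_sum (f := fun i => (ε * t) ^ i / (i.factorial : ℝ))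
        (fun i _ => by positivity) (Finset.self_mem_range_succ n)
    exact h2.trans (Real.sum_le_exp_of_nonneg (by positivity) _)
  rw [mul_pow] at h1
  have hεn : (0:ℝ) < ε ^ n := by positivity
  calc t ^ n = ((n.factorial : ℝ) / ε ^ n) * (ε ^ n * t ^ n / (n.factorial : ℝ)) := by
        field_simp
    _ ≤ ((n.factorial : ℝ) / ε ^ n) * Real.exp (ε * t) := by
        refine mul_le_mul_of_nonneg_left ?_ (by positivity)
        exact h1

/-- the kernel -/
def K17 (g : ℝ → ℂ) (s : ℝ) (m k : ℕ) (z : ℂ) (ξ : ℝ) : ℂ :=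
  g ξ * ((|ξ| ^ (-s) : ℝ) : ℂ) * (Complex.I * ξ) ^ k *
    (Complex.exp (Complex.I * z * ξ) -
      ∑ j ∈ Finset.range (m + 1 - k), (Complex.I * z * ξ) ^ j / (j.factorial : ℂ))

/-- the comparison weight -/
def ψ17 (a s : ℝ) (m : ℕ) : ℝ → ℝ :=
  Set.indicator (Set.Icc (-a) a) fun ξ => |ξ| ^ ((m : ℝ) + 1 - s)

lemma ψ17_nonneg (a s : ℝ) (m : ℕ) (ξ : ℝ) : 0 ≤ ψ17 a s m ξ := by
  unfold ψ17
  refine Set.indicator_nonneg (fun x _ => ?_) ξ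
  exact Real.rpow_nonneg (abs_nonneg x) _

lemma K17_bound {g : ℝ → ℂ} {a s : ℝ} {m k : ℕ} (ha : 0 < a) (hs : 0 < s)
    (hgsupp : ∀ ξ : ℝ, ξ ∉ Set.Icc (-a) a → g ξ = 0) (hk : k ≤ m + 1)
    (z : ℂ) (ξ : ℝ) :
    ‖K17 g s m k z ξ‖ ≤
      ‖g ξ‖ * ψ17 a s m ξ * (‖z‖ ^ (m + 1 - k) * Real.exp (a * ‖z‖)) := by
  by_cases hξ : ξ ∈ Set.Icc (-a) a
  · have hψ : ψ17 a s m ξ = |ξ| ^ ((m : ℝ) + 1 - s) := Set.indicator_of_mem hξ ..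
    by_cases hξ0 : ξ = 0
    · subst hξ0
      have hK0 : K17 g s m k z 0 = 0 := by
        unfold K17
        rw [abs_zero, Real.zero_rpow (neg_ne_zero.2 hs.ne')]
        simp
      rw [hK0, norm_zero]
      have hψ0 := ψ17_nonneg a s m 0
      positivity
    · have hξpos : 0 < |ξ| := abs_pos.2 hξ0
      have hξa : |ξ| ≤ a := abs_le.2 ⟨hξ.1, hξ.2⟩
      have hnorm : ‖K17 g s m k z ξ‖ = ‖g ξ‖ * |ξ| ^ (-s) * |ξ| ^ k *
          ‖Complex.exp (Complex.I * z * ξ) -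
            ∑ j ∈ Finset.range (m + 1 - k), (Complex.I * z * ξ) ^ j / (j.factorial : ℂ)‖ := by
        unfold K17
        rw [norm_mul, norm_mul, norm_mul, norm_pow]
        have h1 : ‖(Complex.I * (ξ:ℂ))‖ = |ξ| := by
          rw [norm_mul, Complex.norm_I, Complex.norm_real, Real.norm_eq_abs, one_mul]
        have h2 : ‖(((|ξ| ^ (-s) : ℝ)) : ℂ)‖ = |ξ| ^ (-s) := by
          rw [Complex.norm_real, Real.norm_eq_abs,
            _root_.abs_of_nonneg (Real.rpow_nonneg (abs_nonneg ξ) _)]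
        rw [h1, h2]
      have hrem : ‖Complex.exp (Complex.I * z * ξ) -
            ∑ j ∈ Finset.range (m + 1 - k), (Complex.I * z * ξ) ^ j / (j.factorial : ℂ)‖ ≤
          (‖z‖ * |ξ|) ^ (m + 1 - k) * Real.exp (a * ‖z‖) := by
        refine (rem_bound17 _ _).trans ?_
        have hw : ‖Complex.I * z * (ξ:ℂ)‖ = ‖z‖ * |ξ| := by
          rw [norm_mul, norm_mul, Complex.norm_I, one_mul, Complex.norm_real,
            Real.norm_eq_abs]
        rw [hw]
        refine mul_le_mul_of_nonneg_left ?_ (by positivity)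
        refine Real.exp_le_exp.2 ?_
        calc ‖z‖ * |ξ| ≤ ‖z‖ * a := by
              exact mul_le_mul_of_nonneg_left hξa (norm_nonneg z)
          _ = a * ‖z‖ := mul_comm _ _
      rw [hnorm, hψ]
      have hpow : |ξ| ^ (-s) * |ξ| ^ k * ((‖z‖ * |ξ|) ^ (m + 1 - k)) =
          |ξ| ^ ((m : ℝ) + 1 - s) * ‖z‖ ^ (m + 1 - k) := by
        rw [mul_pow]
        have hkk : k + (m + 1 - k) = m + 1 := Nat.add_sub_cancel' hk
        calc |ξ| ^ (-s) * |ξ| ^ k * (‖z‖ ^ (m + 1 - k) * |ξ| ^ (m + 1 - k))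
            = (|ξ| ^ (-s) * (|ξ| ^ k * |ξ| ^ (m + 1 - k))) * ‖z‖ ^ (m + 1 - k) := by ring
          _ = (|ξ| ^ (-s) * |ξ| ^ (m + 1 : ℕ)) * ‖z‖ ^ (m + 1 - k) := by
              rw [← pow_add, hkk]
          _ = |ξ| ^ ((m : ℝ) + 1 - s) * ‖z‖ ^ (m + 1 - k) := by
              rw [← Real.rpow_natCast |ξ| (m + 1), ← Real.rpow_add hξpos]
              congr 1
              push_cast
              ring
      calc ‖g ξ‖ * |ξ| ^ (-s) * |ξ| ^ k * ‖_‖ ≤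
            ‖g ξ‖ * |ξ| ^ (-s) * |ξ| ^ k * ((‖z‖ * |ξ|) ^ (m + 1 - k) * Real.exp (a * ‖z‖)) := by
              refine mul_le_mul_of_nonneg_left hrem (by positivity)
        _ = ‖g ξ‖ * (|ξ| ^ ((m : ℝ) + 1 - s)) * (‖z‖ ^ (m + 1 - k) * Real.exp (a * ‖z‖)) := by
              linear_combination (‖g ξ‖ * Real.exp (a * ‖z‖)) * hpow
  · have h0 : g ξ = 0 := hgsupp ξ hξ
    unfold K17
    simp [h0]

lemma integrableOn_abs_rpow17 {q b : ℝ} (hq : -1 < q) (hb : 0 ≤ b) :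
    IntegrableOn (fun ξ : ℝ => |ξ| ^ q) (Set.Icc (-b) b) volume := by
  have h0b : IntervalIntegrable (fun x : ℝ => |x| ^ q) volume 0 b := by
    have hx : IntervalIntegrable (fun x : ℝ => x ^ q) volume 0 b :=
      intervalIntegral.intervalIntegrable_rpow' hq
    rw [intervalIntegrable_iff, Set.uIoc_of_le hb] at hx ⊢
    refine hx.congr_fun (fun x hx' => ?_) measurableSet_Ioc
    rw [abs_of_pos hx'.1]
  have hneg : IntervalIntegrable (fun x : ℝ => |x| ^ q) volume 0 (-b) := by
    have := (IntervalIntegrable.iff_comp_neg enorm_ne_top).mp h0b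
    simpa using this
  have htot : IntervalIntegrable (fun x : ℝ => |x| ^ q) volume (-b) b :=
    hneg.symm.trans h0b
  exact (intervalIntegrable_iff_integrableOn_Icc_of_le (by linarith)).mp htot

lemma measurable_abs_rpow17 (q : ℝ) : Measurable fun x : ℝ => |x| ^ q := by
  have heq : (fun x : ℝ => |x| ^ q) =
      fun x : ℝ => if x = 0 then (0 : ℝ) ^ q else Real.exp (Real.log |x| * q) := by
    funext x
    by_cases hx : x = 0
    · simp [hx]
    · rw [if_neg hx, Real.rpow_def_of_pos (abs_pos.2 hx)]
  rw [heq]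
  refine Measurable.ite ?_ measurable_const ?_
  · exact measurableSet_eq
  · exact ((Real.measurable_log.comp measurable_abs).mul_const q).exp

lemma ψ17_measurable (a s : ℝ) (m : ℕ) : Measurable (ψ17 a s m) := by
  unfold ψ17
  exact (measurable_abs_rpow17 _).indicator measurableSet_Icc

lemma ψ17_memℒp {a s : ℝ} {m : ℕ} (h2 : (-1 : ℝ) < ((m : ℝ) + 1 - s) * 2) (hb : 0 ≤ a) :
    MemLp (ψ17 a s m) 2 volume := by
  rw [memLp_two_iff_integrable_sq_norm (ψ17_measurable a s m).aestronglyMeasurable]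
  have heq : (fun ξ => ‖ψ17 a s m ξ‖ ^ 2) =
      Set.indicator (Set.Icc (-a) a) (fun ξ => |ξ| ^ (((m : ℝ) + 1 - s) * 2)) := by
    funext ξ
    unfold ψ17
    by_cases h : ξ ∈ Set.Icc (-a) a
    · rw [Set.indicator_of_mem h, Set.indicator_of_mem h, Real.norm_eq_abs,
        _root_.abs_of_nonneg (Real.rpow_nonneg (abs_nonneg ξ) _),
        ← Real.rpow_natCast (|ξ| ^ ((m : ℝ) + 1 - s)) 2, ← Real.rpow_mul (abs_nonneg ξ)]
      norm_num
    · rw [Set.indicator_of_notMem h, Set.indicator_of_notMem h]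
      simp
  rw [heq, integrable_indicator_iff measurableSet_Icc]
  exact integrableOn_abs_rpow17 h2 hb

lemma B17_integrable {g : ℝ → ℂ} {a s : ℝ} {m : ℕ} (hgm : Measurable g)
    (hgL2 : Integrable fun ξ => ‖g ξ‖ ^ 2) (h2 : (-1 : ℝ) < ((m : ℝ) + 1 - s) * 2)
    (hb : 0 ≤ a) :
    Integrable (fun ξ => ‖g ξ‖ * ψ17 a s m ξ) volume := by
  have hg2 : MemLp g 2 volume :=
    (memLp_two_iff_integrable_sq_norm hgm.aestronglyMeasurable).2 hgL2
  have hψ2 : MemLp (ψ17 a s m) 2 volume := ψ17_memℒp h2 hb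
  have h := hg2.norm.smul (φ := ψ17 a s m) hψ2
    (p := 2) (q := 2) (r := 1) (hpqr := ⟨by rw [inv_one]; exact ENNReal.inv_two_add_inv_two⟩)
  rw [memLp_one_iff_integrable] at h
  have heq : (ψ17 a s m • fun ξ => ‖g ξ‖) = fun ξ => ‖g ξ‖ * ψ17 a s m ξ := by
    funext ξ
    simp [mul_comm]
  rwa [heq] at h

lemma K17_hasDerivAt {g : ℝ → ℂ} {s : ℝ} {m k : ℕ} (hk : k ≤ m) (z : ℂ) (ξ : ℝ) :
    HasDerivAt (fun w => K17 g s m k w ξ) (K17 g s m (k + 1) z ξ) z := by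
  set cξ : ℂ := Complex.I * ξ with hcξ
  obtain ⟨n, hn⟩ : ∃ n, m + 1 - k = n + 1 := ⟨m - k, by omega⟩
  have hn' : m + 1 - (k + 1) = n := by omega
  have harg : ∀ w : ℂ, Complex.I * w * ξ = cξ * w := fun w => by rw [hcξ]; ring
  have hexp : HasDerivAt (fun w : ℂ => Complex.exp (cξ * w)) (cξ * Complex.exp (cξ * z)) z := by
    have h1 : HasDerivAt (fun w : ℂ => cξ * w) cξ z := by
      simpa using (hasDerivAt_id z).const_mul cξ
    simpa [mul_comm] using h1.cexp
  have hsum : HasDerivAt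
      (fun w : ℂ => ∑ j ∈ Finset.range (n + 1), (cξ * w) ^ j / (j.factorial : ℂ))
      (cξ * ∑ j ∈ Finset.range n, (cξ * z) ^ j / (j.factorial : ℂ)) z := by
    have hterm : ∀ j : ℕ, HasDerivAt (fun w : ℂ => (cξ * w) ^ j / (j.factorial : ℂ))
        ((j : ℂ) * (cξ * z) ^ (j - 1) * cξ / (j.factorial : ℂ)) z := by
      intro j
      have h1 : HasDerivAt (fun w : ℂ => cξ * w) cξ z := by
        simpa using (hasDerivAt_id z).const_mul cξ
      exact ((hasDerivAt_pow j (cξ * z)).comp z h1).div_const _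
    have hsum0 := HasDerivAt.fun_sum
      (fun j (_ : j ∈ Finset.range (n + 1)) => hterm j)
    refine hsum0.congr_deriv ?_
    symm
    rw [Finset.sum_range_succ']
    have h0 : ((0 : ℕ) : ℂ) * (cξ * z) ^ (0 - 1) * cξ / ((Nat.factorial 0 : ℕ) : ℂ) = 0 := by
      simp
    rw [h0, add_zero, Finset.mul_sum]
    refine Finset.sum_congr rfl fun j _ => ?_
    have hfact : (((j + 1).factorial : ℕ) : ℂ) = ((j + 1 : ℕ) : ℂ) * ((j.factorial : ℕ) : ℂ) := by
      rw [Nat.factorial_succ]; push_cast; ring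
    have hj1 : ((j + 1 : ℕ) : ℂ) ≠ 0 := by exact_mod_cast Nat.succ_ne_zero j
    have hjf : ((j.factorial : ℕ) : ℂ) ≠ 0 := by exact_mod_cast j.factorial_ne_zero
    rw [add_tsub_cancel_right, hfact]
    push_cast at hj1 hjf ⊢
    field_simp
  have hKfun : (fun w => K17 g s m k w ξ) =
      fun w => (g ξ * ((|ξ| ^ (-s) : ℝ) : ℂ) * cξ ^ k) *
        (Complex.exp (cξ * w) - ∑ j ∈ Finset.range (n + 1), (cξ * w) ^ j / (j.factorial : ℂ)) := by
    funext w
    unfold K17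
    rw [hn, harg w]
  rw [hKfun]
  have h := (hexp.sub hsum).const_mul (g ξ * ((|ξ| ^ (-s) : ℝ) : ℂ) * cξ ^ k)
  refine h.congr_deriv ?_
  unfold K17
  rw [hn', harg z]
  ring

lemma K17_aestronglyMeasurable (g : ℝ → ℂ) (hgm : Measurable g) (s : ℝ) (m k : ℕ) (z : ℂ) :
    AEStronglyMeasurable (fun ξ => K17 g s m k z ξ) volume := by
  have hh : Measurable fun ξ : ℝ => ((|ξ| ^ (-s) : ℝ) : ℂ) :=
    Complex.measurable_ofReal.comp (measurable_abs_rpow17 (-s))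
  have hc1 : Continuous fun ξ : ℝ => (Complex.I * (ξ : ℂ)) ^ k :=
    (continuous_const.mul Complex.continuous_ofReal).pow k
  have hc2 : Continuous fun ξ : ℝ => Complex.exp (Complex.I * z * ξ) -
      ∑ j ∈ Finset.range (m + 1 - k), (Complex.I * z * (ξ : ℂ)) ^ j / (j.factorial : ℂ) := by
    have hlin : Continuous fun ξ : ℝ => Complex.I * z * (ξ : ℂ) :=
      continuous_const.mul Complex.continuous_ofReal
    exact (hlin.cexp).sub (continuous_finset_sum _ fun j _ => (hlin.pow j).div_const _)
  exact (((hgm.mul hh).mul hc1.measurable).mul hc2.measurable).aestronglyMeasurable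

lemma K17_integrable {g : ℝ → ℂ} {a s : ℝ} {m k : ℕ} (ha : 0 < a) (hs : 0 < s)
    (hgm : Measurable g) (hgsupp : ∀ ξ : ℝ, ξ ∉ Set.Icc (-a) a → g ξ = 0)
    (hgL2 : Integrable fun ξ => ‖g ξ‖ ^ 2) (h2 : (-1 : ℝ) < ((m : ℝ) + 1 - s) * 2)
    (hk : k ≤ m + 1) (z : ℂ) :
    Integrable (fun ξ => K17 g s m k z ξ) volume := by
  refine (((B17_integrable hgm hgL2 h2 ha.le).mul_const
    (‖z‖ ^ (m + 1 - k) * Real.exp (a * ‖z‖))).mono'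
    (K17_aestronglyMeasurable g hgm s m k z) ?_)
  exact ae_of_all _ fun ξ => K17_bound ha hs hgsupp hk z ξ

lemma G17_hasDerivAt {g : ℝ → ℂ} {a s : ℝ} {m k : ℕ} (ha : 0 < a) (hs : 0 < s)
    (hgm : Measurable g) (hgsupp : ∀ ξ : ℝ, ξ ∉ Set.Icc (-a) a → g ξ = 0)
    (hgL2 : Integrable fun ξ => ‖g ξ‖ ^ 2) (h2 : (-1 : ℝ) < ((m : ℝ) + 1 - s) * 2)
    (hk : k ≤ m) (z₀ : ℂ) :
    HasDerivAt (fun z => ∫ ξ : ℝ, K17 g s m k z ξ)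
      (∫ ξ : ℝ, K17 g s m (k + 1) z₀ ξ) z₀ := by
  have key := hasDerivAt_integral_of_dominated_loc_of_deriv_le (μ := volume)
    (F := fun z ξ => K17 g s m k z ξ) (F' := fun z ξ => K17 g s m (k + 1) z ξ)
    (x₀ := z₀)
    (bound := fun ξ => ‖g ξ‖ * ψ17 a s m ξ *
      ((‖z₀‖ + 1) ^ (m + 1 - (k + 1)) * Real.exp (a * (‖z₀‖ + 1))))
    (s := Metric.ball z₀ 1) (hs := Metric.ball_mem_nhds z₀ one_pos)
    (hF_meas := Eventually.of_forall fun z => K17_aestronglyMeasurable g hgm s m k z)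
    (hF_int := K17_integrable ha hs hgm hgsupp hgL2 h2 (by omega) z₀)
    (hF'_meas := K17_aestronglyMeasurable g hgm s m (k + 1) z₀)
    (h_bound := ?_) (bound_integrable := ?_) (h_diff := ?_)
  · exact key.2
  · refine ae_of_all _ fun ξ z hz => ?_
    refine (K17_bound ha hs hgsupp (by omega) z ξ).trans ?_
    have hz1 : ‖z‖ ≤ ‖z₀‖ + 1 := by
      have h1 : ‖z‖ ≤ ‖z₀‖ + ‖z - z₀‖ := norm_le_norm_add_norm_sub' z z₀
      have h2' : ‖z - z₀‖ < 1 := by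
        rw [← dist_eq_norm]
        exact Metric.mem_ball.mp hz
      linarith
    have hψ := ψ17_nonneg a s m ξ
    refine mul_le_mul_of_nonneg_left ?_ (by positivity)
    refine mul_le_mul ?_ ?_ (Real.exp_pos _).le (by positivity)
    · exact pow_le_pow_left₀ (norm_nonneg z) hz1 _
    · refine Real.exp_le_exp.2 ?_
      refine mul_le_mul_of_nonneg_left (by linarith) ha.le
  · exact (B17_integrable hgm hgL2 h2 ha.le).mul_const _
  · exact ae_of_all _ fun ξ z _ => K17_hasDerivAt hk z ξ

theorem stmt17 (a s : ℝ) (m : ℕ) (ha : 0 < a) (hs : 1 / 2 < s)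
    (hsnotnat : ∀ n : ℕ, s - 1 / 2 ≠ n) (hm : m = Nat.floor (s - 1 / 2))
    (g : ℝ → ℂ) (hgm : Measurable g)
    (hgsupp : ∀ ξ : ℝ, ξ ∉ Set.Icc (-a) a → g ξ = 0)
    (hgL2 : Integrable (fun ξ : ℝ => ‖g ξ‖ ^ 2))
    (F : ℂ → ℂ)
    (hF : ∀ z : ℂ, F z =
      (((2 * Real.pi) ^ (-(1 / 2) : ℝ) : ℝ) : ℂ) *
        ∫ ξ : ℝ, g ξ * ((|ξ| ^ (-s) : ℝ) : ℂ) * (Complex.exp (Complex.I * z * ξ) -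
          ∑ j ∈ Finset.range (m + 1), (Complex.I * z * ξ) ^ j / (j.factorial : ℂ))) :
    (∀ z : ℂ, Integrable (fun ξ : ℝ =>
      g ξ * ((|ξ| ^ (-s) : ℝ) : ℂ) * (Complex.exp (Complex.I * z * ξ) -
        ∑ j ∈ Finset.range (m + 1), (Complex.I * z * ξ) ^ j / (j.factorial : ℂ)))) ∧
    Differentiable ℂ F ∧ ExpType a F ∧
    (∀ j : ℕ, j ≤ m → iteratedDeriv j F 0 = 0) ∧
    (∀ z : ℂ, iteratedDeriv (m + 1) F z =
      (((2 * Real.pi) ^ (-(1 / 2) : ℝ) : ℝ) : ℂ) *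
        ∫ ξ : ℝ, (Complex.I * ξ) ^ (m + 1) * ((|ξ| ^ (-s) : ℝ) : ℂ) * g ξ *
          Complex.exp (Complex.I * z * ξ)) := by
  have hs0 : 0 < s := by linarith
  have hm2 : s - 1 / 2 < (m : ℝ) + 1 := by
    rw [hm]
    exact_mod_cast Nat.lt_floor_add_one (s - 1 / 2)
  have h2 : (-1 : ℝ) < ((m : ℝ) + 1 - s) * 2 := by linarith
  set c : ℂ := (((2 * Real.pi) ^ (-(1 / 2) : ℝ) : ℝ) : ℂ) with hc
  have hint0 : ∀ k, k ≤ m + 1 → ∀ z : ℂ, Integrable (fun ξ => K17 g s m k z ξ) volume :=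
    fun k hk z => K17_integrable ha hs0 hgm hgsupp hgL2 h2 hk z
  have hKeq : ∀ z : ℂ, (fun ξ : ℝ => g ξ * ((|ξ| ^ (-s) : ℝ) : ℂ) *
      (Complex.exp (Complex.I * z * ξ) -
        ∑ j ∈ Finset.range (m + 1), (Complex.I * z * ξ) ^ j / (j.factorial : ℂ))) =
      fun ξ => K17 g s m 0 z ξ := by
    intro z
    funext ξ
    unfold K17
    rw [Nat.sub_zero, pow_zero, mul_one]
  have hFeq : F = fun z => c * ∫ ξ : ℝ, K17 g s m 0 z ξ := by
    funext z
    rw [hF z, hKeq z]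
  have hGd : ∀ k, k ≤ m → ∀ z₀ : ℂ, HasDerivAt (fun z => c * ∫ ξ : ℝ, K17 g s m k z ξ)
      (c * ∫ ξ : ℝ, K17 g s m (k + 1) z₀ ξ) z₀ :=
    fun k hk z₀ => (G17_hasDerivAt ha hs0 hgm hgsupp hgL2 h2 hk z₀).const_mul c
  have hiter : ∀ k, k ≤ m + 1 → iteratedDeriv k F = fun z => c * ∫ ξ : ℝ, K17 g s m k z ξ := by
    intro k
    induction k with
    | zero => intro _; rw [iteratedDeriv_zero]; exact hFeq
    | succ k ih =>
      intro hk
      rw [iteratedDeriv_succ, ih (by omega)]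
      funext z₀
      exact (hGd k (by omega) z₀).deriv
  refine ⟨?_, ?_, ?_, ?_, ?_⟩
  · intro z
    rw [hKeq z]
    exact hint0 0 (by omega) z
  · rw [hFeq]
    exact fun z₀ => (hGd 0 (Nat.zero_le m) z₀).differentiableAt
  · intro ε hε
    set D : ℝ := ∫ ξ : ℝ, ‖g ξ‖ * ψ17 a s m ξ with hD'
    have hD : 0 ≤ D :=
      integral_nonneg fun ξ => mul_nonneg (norm_nonneg _) (ψ17_nonneg a s m ξ)
    refine ⟨‖c‖ * D * (((m + 1).factorial : ℝ) / ε ^ (m + 1)) + 1, by positivity, fun z => ?_⟩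
    have hb1 : ‖F z‖ ≤ ‖c‖ * (D * (‖z‖ ^ (m + 1) * Real.exp (a * ‖z‖))) := by
      rw [hFeq]
      simp only []
      rw [norm_mul]
      refine mul_le_mul_of_nonneg_left ?_ (norm_nonneg c)
      refine (norm_integral_le_integral_norm _).trans ?_
      have hmono := integral_mono (hint0 0 (by omega) z).norm
        ((B17_integrable hgm hgL2 h2 ha.le).mul_const (‖z‖ ^ (m + 1) * Real.exp (a * ‖z‖)))
        (fun ξ => by have := K17_bound ha hs0 hgsupp (m := m) (k := 0) (by omega) z ξ; rw [Nat.sub_zero] at this; exact this)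
      refine hmono.trans ?_
      rw [integral_mul_const]
    refine hb1.trans ?_
    have hpow := pow_le_exp17 (m + 1) hε (norm_nonneg z)
    calc ‖c‖ * (D * (‖z‖ ^ (m + 1) * Real.exp (a * ‖z‖)))
        ≤ ‖c‖ * (D * ((((m + 1).factorial : ℝ) / ε ^ (m + 1) * Real.exp (ε * ‖z‖)) *
            Real.exp (a * ‖z‖))) := by
          refine mul_le_mul_of_nonneg_left (mul_le_mul_of_nonneg_left
            (mul_le_mul_of_nonneg_right hpow (Real.exp_pos _).le) hD) (norm_nonneg c)
      _ = ‖c‖ * D * (((m + 1).factorial : ℝ) / ε ^ (m + 1)) * Real.exp ((a + ε) * ‖z‖) := by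
          rw [show (a + ε) * ‖z‖ = ε * ‖z‖ + a * ‖z‖ by ring, Real.exp_add]
          ring
      _ ≤ (‖c‖ * D * (((m + 1).factorial : ℝ) / ε ^ (m + 1)) + 1) *
            Real.exp ((a + ε) * ‖z‖) := by
          refine mul_le_mul_of_nonneg_right (by linarith) (Real.exp_pos _).le
  · intro j hj
    rw [hiter j (by omega)]
    have hK0 : ∀ ξ : ℝ, K17 g s m j 0 ξ = 0 := by
      intro ξ
      unfold K17
      obtain ⟨n, hn⟩ : ∃ n, m + 1 - j = n + 1 := ⟨m - j, by omega⟩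
      rw [hn]
      have h00 : Complex.I * 0 * (ξ : ℂ) = 0 := by ring
      rw [h00, Finset.sum_range_succ']
      simp
    simp only [hK0, integral_zero, mul_zero]
  · intro z
    rw [hiter (m + 1) le_rfl]
    simp only []
    congr 1
    refine integral_congr_ae (Eventually.of_forall fun ξ => ?_)
    unfold K17
    rw [Nat.sub_self, Finset.range_zero, Finset.sum_empty, sub_zero]
    ring
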